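/- (Countable additivity on S̃.) Let (S_i)_{i≥1} be a sequence of sets in S̃ that are pairwise almost disjoint, i.e., μ*(S_i ∩ S_j) = 0 for all i ≠ j. Then μ*(⋃_{i=1}^∞ S_i) = ∑_{i=1}^∞ μ*(S_i). -/

import Mathlib

open Filter Set Topology
open scoped symmDiff ENNReal

/-- `Ω` is an algebra of sets on `X`: it contains `∅` and is closed under
complements and finite unions. -/
def IsSetAlgebraOn {X : Type*} (Ω : Set (Set X)) : Prop :=
  ∅ ∈ Ω ∧ (∀ A ∈ Ω, Aᶜ ∈ Ω) ∧ (∀ A ∈ Ω, ∀ B ∈ Ω, A ∪ B ∈ Ω)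

/-- `μ` is a countably additive measure on the algebra `Ω`. -/
def IsCountablyAdditiveOn {X : Type*} (Ω : Set (Set X)) (μ : Set X → ℝ≥0∞) : Prop :=
  μ ∅ = 0 ∧ ∀ A : ℕ → Set X, (∀ i, A i ∈ Ω) → Pairwise (Function.onFun Disjoint A) →
    (⋃ i, A i) ∈ Ω → μ (⋃ i, A i) = ∑' i, μ (A i)

/-- The outer measure induced by `μ`:
`μ*(A) = inf { ∑ μ(Cᵢ) : A ⊆ ⋃ᵢ Cᵢ, Cᵢ ∈ Ω }`. -/
noncomputable def muStar {X : Type*} (Ω : Set (Set X)) (μ : Set X → ℝ≥0∞)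
    (A : Set X) : ℝ≥0∞ :=
  ⨅ (C : ℕ → Set X) (_ : ∀ i, C i ∈ Ω) (_ : A ⊆ ⋃ i, C i), ∑' i, μ (C i)

/-- A `μ`-Cauchy sequence in `Ω`: a sequence of members of `Ω` with
`μ(B n ∆ B m) → 0` as `n, m → ∞`. -/
def MuCauchy {X : Type*} (Ω : Set (Set X)) (μ : Set X → ℝ≥0∞) (B : ℕ → Set X) : Prop :=
  (∀ n, B n ∈ Ω) ∧ Tendsto (fun p : ℕ × ℕ => μ (B p.1 ∆ B p.2)) atTop (𝓝 0)

/-- `S̃`: the collection of subsets of `X` that are limits (in the pseudometric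
`d(A,B) = μ*(A ∆ B)`) of `μ`-Cauchy sequences from `Ω`. -/
def Stilde {X : Type*} (Ω : Set (Set X)) (μ : Set X → ℝ≥0∞) : Set (Set X) :=
  {S | ∃ B : ℕ → Set X, MuCauchy Ω μ B ∧
    Tendsto (fun n => muStar Ω μ (B n ∆ S)) atTop (𝓝 0)}

open MeasureTheory

section helpers
variable {X : Type*} {Ω : Set (Set X)} {μ : Set X → ℝ≥0∞}

lemma alg_inter (hΩ : IsSetAlgebraOn Ω) {A B : Set X} (hA : A ∈ Ω) (hB : B ∈ Ω) :
    A ∩ B ∈ Ω := by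
  have : (Aᶜ ∪ Bᶜ)ᶜ ∈ Ω := hΩ.2.1 _ (hΩ.2.2 _ (hΩ.2.1 _ hA) _ (hΩ.2.1 _ hB))
  simpa [Set.compl_union] using this

lemma alg_diff (hΩ : IsSetAlgebraOn Ω) {A B : Set X} (hA : A ∈ Ω) (hB : B ∈ Ω) :
    A \ B ∈ Ω := by
  have : A ∩ Bᶜ ∈ Ω := alg_inter hΩ hA (hΩ.2.1 _ hB)
  simpa [Set.diff_eq] using this

/-- finite additivity of `μ` on `Ω`. -/
lemma mu_add (hΩ : IsSetAlgebraOn Ω) (hμ : IsCountablyAdditiveOn Ω μ)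
    {A B : Set X} (hA : A ∈ Ω) (hB : B ∈ Ω) (hd : Disjoint A B) :
    μ (A ∪ B) = μ A + μ B := by
  set f : ℕ → Set X := fun n => if n = 0 then A else if n = 1 then B else ∅ with hf
  have hU : (⋃ i, f i) = A ∪ B := by
    apply subset_antisymm
    · refine iUnion_subset fun i => ?_
      simp only [hf]
      split_ifs <;> simp
    · refine union_subset ?_ ?_
      · simpa [hf] using subset_iUnion f 0
      · simpa [hf] using subset_iUnion f 1
  have hmem : ∀ i, f i ∈ Ω := by
    intro i; simp only [hf]; split_ifs <;> simp [hA, hB, hΩ.1]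
  have hpair : Pairwise (Function.onFun Disjoint f) := by
    intro i j hij
    simp only [Function.onFun, hf]
    split_ifs <;> simp_all <;> first
      | exact hd | exact hd.symm
  have := hμ.2 f hmem hpair (hU ▸ hΩ.2.2 _ hA _ hB)
  rw [hU] at this
  rw [this, tsum_eq_sum (s := ({0, 1} : Finset ℕ)) ?_]
  · simp [hf]
  · intro i hi
    have h0 : i ≠ 0 := by intro h; subst h; simp at hi
    have h1 : i ≠ 1 := by intro h; subst h; simp at hi
    simp [hf, h0, h1, hμ.1]

open scoped Classical in
/-- The auxiliary set function: `μ` on `Ω`, `⊤` elsewhere. -/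
noncomputable def nuF (Ω : Set (Set X)) (μ : Set X → ℝ≥0∞) : Set X → ℝ≥0∞ :=
  fun B => if B ∈ Ω then μ B else ⊤

/-- The induced outer measure. -/
noncomputable def OM (Ω : Set (Set X)) (μ : Set X → ℝ≥0∞)
    (hΩ : IsSetAlgebraOn Ω) (hμ : IsCountablyAdditiveOn Ω μ) : OuterMeasure X :=
  OuterMeasure.ofFunction (nuF Ω μ) (by simp [nuF, hΩ.1, hμ.1])

lemma muStar_eq (hΩ : IsSetAlgebraOn Ω) (hμ : IsCountablyAdditiveOn Ω μ) (A : Set X) :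
    muStar Ω μ A = OM Ω μ hΩ hμ A := by
  rw [OM, OuterMeasure.ofFunction_eq_iInf_mem (m := nuF Ω μ)
    (m_empty := by simp [nuF, hΩ.1, hμ.1]) (P := fun s => s ∈ Ω)
    (fun s hs => by simp [nuF, hs]) A, muStar]
  refine iInf_congr fun C => iInf_congr fun hC => iInf_congr fun _ => tsum_congr fun i => ?_
  simp [nuF, hC i]

/-- sets of `Ω` are Carathéodory-measurable for `OM`. -/
lemma isCara_of_mem (hΩ : IsSetAlgebraOn Ω) (hμ : IsCountablyAdditiveOn Ω μ)
    {B : Set X} (hB : B ∈ Ω) (E : Set X) :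
    OM Ω μ hΩ hμ (E ∩ B) + OM Ω μ hΩ hμ (E \ B) ≤ OM Ω μ hΩ hμ E := by
  have h := OuterMeasure.ofFunction_caratheodory
    (m := nuF Ω μ) (h₀ := by simp [nuF, hΩ.1, hμ.1]) (s := B) ?_
  · exact le_of_eq ((OuterMeasure.isCaratheodory_iff _).mpr h E).symm
  · intro t
    by_cases ht : t ∈ Ω
    · have h1 : t ∩ B ∈ Ω := alg_inter hΩ ht hB
      have h2 : t \ B ∈ Ω := alg_diff hΩ ht hB
      have : μ (t ∩ B) + μ (t \ B) = μ t := by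
        rw [← mu_add hΩ hμ h1 h2 (disjoint_of_subset_left inter_subset_right disjoint_sdiff_right), Set.inter_union_diff]
      simp [nuF, ht, h1, h2, this]
    · simp [nuF, ht]

/-- sets of `S̃` are "essentially Carathéodory-measurable" for `OM`. -/
lemma esscara (hΩ : IsSetAlgebraOn Ω) (hμ : IsCountablyAdditiveOn Ω μ)
    {T : Set X} (hT : T ∈ Stilde Ω μ) (E : Set X) :
    OM Ω μ hΩ hμ (E ∩ T) + OM Ω μ hΩ hμ (E \ T) ≤ OM Ω μ hΩ hμ E := by
  obtain ⟨B, ⟨hBmem, _⟩, hlim⟩ := hT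
  refine ENNReal.le_of_forall_pos_le_add fun ε hε _ => ?_
  have hhalf : (0 : ℝ≥0∞) < ε / 2 := ENNReal.half_pos (by exact_mod_cast hε.ne')
  obtain ⟨n, hn⟩ := ((tendsto_order.1 hlim).2 _ hhalf).exists
  have hd : OM Ω μ hΩ hμ (B n ∆ T) < ε / 2 := by rwa [← muStar_eq hΩ hμ]
  have h1 : OM Ω μ hΩ hμ (E ∩ T) ≤ OM Ω μ hΩ hμ (E ∩ B n) + OM Ω μ hΩ hμ (B n ∆ T) := by
    refine (measure_mono ?_).trans (measure_union_le _ _)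
    rintro x ⟨hxE, hxT⟩
    by_cases hxB : x ∈ B n
    · exact Or.inl ⟨hxE, hxB⟩
    · exact Or.inr (Set.mem_symmDiff.2 (Or.inr ⟨hxT, hxB⟩))
  have h2 : OM Ω μ hΩ hμ (E \ T) ≤ OM Ω μ hΩ hμ (E \ B n) + OM Ω μ hΩ hμ (B n ∆ T) := by
    refine (measure_mono ?_).trans (measure_union_le _ _)
    rintro x ⟨hxE, hxT⟩
    by_cases hxB : x ∈ B n
    · exact Or.inr (Set.mem_symmDiff.2 (Or.inl ⟨hxB, hxT⟩))
    · exact Or.inl ⟨hxE, hxB⟩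
  calc OM Ω μ hΩ hμ (E ∩ T) + OM Ω μ hΩ hμ (E \ T)
      ≤ (OM Ω μ hΩ hμ (E ∩ B n) + OM Ω μ hΩ hμ (B n ∆ T)) +
        (OM Ω μ hΩ hμ (E \ B n) + OM Ω μ hΩ hμ (B n ∆ T)) := add_le_add h1 h2
    _ = (OM Ω μ hΩ hμ (E ∩ B n) + OM Ω μ hΩ hμ (E \ B n)) +
        (OM Ω μ hΩ hμ (B n ∆ T) + OM Ω μ hΩ hμ (B n ∆ T)) := by ring
    _ ≤ OM Ω μ hΩ hμ E + (ε / 2 + ε / 2) :=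
        add_le_add (isCara_of_mem hΩ hμ (hBmem n) E) (add_le_add hd.le hd.le)
    _ = OM Ω μ hΩ hμ E + ε := by rw [ENNReal.add_halves]

end helpers

/-- countable additivity on S̃. -/
theorem stmt15 {X : Type*} (Ω : Set (Set X)) (μ : Set X → ℝ≥0∞)
    (hΩ : IsSetAlgebraOn Ω) (hμ : IsCountablyAdditiveOn Ω μ) (hfin : μ Set.univ ≠ ⊤)
    (S : ℕ → Set X) (hS : ∀ i, S i ∈ Stilde Ω μ)
    (hdisj : ∀ i j, i ≠ j → muStar Ω μ (S i ∩ S j) = 0) :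
    muStar Ω μ (⋃ i, S i) = ∑' i, muStar Ω μ (S i) := by
  simp only [muStar_eq hΩ hμ] at hdisj ⊢
  set m := OM Ω μ hΩ hμ with hm
  refine le_antisymm (measure_iUnion_le S) ?_
  rw [ENNReal.tsum_eq_iSup_nat]
  refine iSup_le fun N => ?_
  set U : ℕ → Set X := fun N => ⋃ i ∈ Finset.range N, S i with hUdef
  have key : ∀ N, ∑ i ∈ Finset.range N, m (S i) ≤ m (U N) := by
    intro N
    induction N with
    | zero => simp [hUdef]
    | succ N ih =>
      have hU : U (N + 1) = S N ∪ U N := by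
        ext x
        simp only [hUdef, mem_iUnion, mem_union, Finset.mem_range,
          Nat.lt_succ_iff_lt_or_eq]
        constructor
        · rintro ⟨i, (hi | rfl), hx⟩
          exacts [Or.inr ⟨i, hi, hx⟩, Or.inl hx]
        · rintro (hx | ⟨i, hi, hx⟩)
          exacts [⟨N, Or.inr rfl, hx⟩, ⟨i, Or.inl hi, hx⟩]
      have hzero : m (U N ∩ S N) = 0 := by
        set T : ℕ → Set X := fun i => if i = N then ∅ else S i ∩ S N with hT
        have hsub : U N ∩ S N ⊆ ⋃ i, T i := by
          rintro x ⟨hxU, hxS⟩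
          simp only [hUdef, mem_iUnion, Finset.mem_range] at hxU
          obtain ⟨i, hiN, hxi⟩ := hxU
          exact mem_iUnion.2 ⟨i, by simp [hT, hiN.ne, hxi, hxS]⟩
        have : m (⋃ i, T i) ≤ ∑' i, m (T i) := measure_iUnion_le T
        have hTz : ∀ i, m (T i) = 0 := by
          intro i
          by_cases hi : i = N
          · simp [hT, hi]
          · simp only [hT, if_neg hi]
            exact hdisj i N hi
        refine le_antisymm ((measure_mono hsub).trans (this.trans ?_)) zero_le
        simp [hTz]
      have hstep : m (S N) + m (U N) ≤ m (U (N + 1)) := by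
        have h1 := esscara hΩ hμ (hS N) (U (N + 1))
        have h2 : m (S N) ≤ m (U (N + 1) ∩ S N) :=
          measure_mono (subset_inter (hU ▸ subset_union_left) subset_rfl)
        have h3 : m (U N) ≤ m (U (N + 1) \ S N) := by
          have := measure_le_inter_add_diff m (U N) (S N)
          rw [hzero, zero_add] at this
          exact this.trans (measure_mono (diff_subset_diff_left (hU ▸ subset_union_right)))
        exact (add_le_add h2 h3).trans h1
      rw [Finset.sum_range_succ, add_comm]
      exact (add_le_add_right ih _).trans ((add_le_add_right (le_refl _) _).trans hstep)
  refine (key N).trans (measure_mono ?_)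
  exact iUnion₂_subset fun i _ => subset_iUnion S i
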